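/- If the linear term dS = ⟨g(w), dg(w, dw)⟩ of the Taylor expansion of S at w in the direction dw is strictly positive, then the norm of the backpropagated gradient increases after the weight correction: there exists ε > 0 such that for all t with 0 < t < ε, ‖g(w + t·dw)‖ > ‖g(w)‖. (Increase direction of Theorem 1 of the paper.) -/

import Mathlib

open Matrix

/-- The embedding of `n → ℝ` into `EuclideanSpace ℝ n`, so that `‖euc x‖` is the
Euclidean norm of `x`. -/
noncomputable def euc {n : Type*} [Fintype n] (x : n → ℝ) : EuclideanSpace ℝ n :=
  (EuclideanSpace.equiv n ℝ).symm x

/-- The backpropagated gradient vector `g(w) = D₁·w·D₂·w ⋯ D_h·w·δ`. -/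
noncomputable def gVec {n : Type*} [Fintype n] [DecidableEq n] {h : ℕ}
    (D : Fin h → Matrix n n ℝ) (δ : n → ℝ) (w : Matrix n n ℝ) : n → ℝ :=
  (List.ofFn fun i : Fin h => D i * w).prod *ᵥ δ

/-- The vector `dg(w, dw) = Σ_{i=1}^{h} D₁·w ⋯ Dᵢ·dw ⋯ D_h·w·δ`, obtained from
`g(w)` by replacing the `i`-th occurrence of `w` by `dw` and summing over `i`. -/
noncomputable def dgVec {n : Type*} [Fintype n] [DecidableEq n] {h : ℕ}
    (D : Fin h → Matrix n n ℝ) (δ : n → ℝ) (w dw : Matrix n n ℝ) : n → ℝ :=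
  ∑ i : Fin h,
    (List.ofFn fun j : Fin h => if j = i then D j * dw else D j * w).prod *ᵥ δ

attribute [local instance] Matrix.normedAddCommGroup Matrix.normedSpace

/-- **Theorem 1 (increase direction).** If the linear term
`dS = ⟨g(w), dg(w, dw)⟩` of the Taylor expansion of `S` at `w` in the direction `dw`
is strictly positive, then the norm of the backpropagated gradient increases after
the weight correction: there exists `ε > 0` such that for all `0 < t < ε`,
`‖g(w + t·dw)‖ > ‖g(w)‖`. -/
theorem norm_increases_of_dS_pos
    {n : Type*} [Fintype n] [DecidableEq n] (h : ℕ) (hh : 1 ≤ h)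
    (D : Fin h → Matrix n n ℝ) (hD : ∀ i, (D i).IsDiag) (δ : n → ℝ)
    (w dw : Matrix n n ℝ)
    (hpos : (0 : ℝ) < inner ℝ (euc (gVec D δ w)) (euc (dgVec D δ w dw))) :
    ∃ ε > (0 : ℝ), ∀ t : ℝ, 0 < t → t < ε →
      ‖euc (gVec D δ (w + t • dw))‖ > ‖euc (gVec D δ w)‖ := by
  classical
  -- the linear map `M ↦ euc (M *ᵥ δ)`
  let L0 : Matrix n n ℝ →ₗ[ℝ] EuclideanSpace ℝ n :=
    { toFun := fun M => euc (M *ᵥ δ)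
      map_add' := fun A B => by simp [euc, Matrix.add_mulVec, map_add]
      map_smul' := fun c A => by simp [euc, Matrix.smul_mulVec, _root_.map_smul, WithLp.toLp_smul] }
  let L : Matrix n n ℝ →L[ℝ] EuclideanSpace ℝ n := L0.toContinuousLinearMap
  let f := ContinuousMultilinearMap.mkPiAlgebraFin ℝ h (Matrix n n ℝ)
  set G : ℝ → EuclideanSpace ℝ n := fun t => euc (gVec D δ (w + t • dw)) with hGdef
  have hG0 : G 0 = euc (gVec D δ w) := by simp [hGdef]
  -- derivative of the path of arguments
  have hpath : HasDerivAt (fun t : ℝ => fun i : Fin h => D i * (w + t • dw))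
      (fun i => D i * dw) 0 := by
    refine hasDerivAt_pi.2 ?_
    intro i
    have h1 : HasDerivAt (fun t : ℝ => w + t • dw) dw 0 := by
      have h0 := ((hasDerivAt_id (0 : ℝ)).smul_const dw).const_add w
      simp only [id_eq, one_smul] at h0
      exact h0
    have h2 := ((LinearMap.mulLeft ℝ (D i)).toContinuousLinearMap.hasFDerivAt).comp_hasDerivAt
      (0 : ℝ) h1
    simp only [Function.comp_def] at h2
    exact h2
  have hx : (fun i : Fin h => D i * (w + (0 : ℝ) • dw)) = fun i => D i * w := by
    funext i; simp
  have hfd := (f.hasFDerivAt (fun i : Fin h => D i * (w + (0 : ℝ) • dw))).comp_hasDerivAt (0 : ℝ) hpath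
  rw [hx] at hfd
  have hL := (L.hasFDerivAt).comp_hasDerivAt (0 : ℝ) hfd
  -- identify the function and the derivative
  have hfun : (⇑L ∘ ⇑f ∘ fun (t : ℝ) (i : Fin h) => D i * (w + t • dw)) = G := by
    funext t; rfl
  have hupd : ∀ i : Fin h, Function.update (fun j : Fin h => D j * w) i (D i * dw)
      = fun j => if j = i then D j * dw else D j * w := by
    intro i; funext j
    rcases eq_or_ne j i with rfl | hj
    · simp
    · simp [Function.update_of_ne hj, hj]
  have hval : L ((f.linearDeriv (fun i : Fin h => D i * w)) fun i => D i * dw)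
      = euc (dgVec D δ w dw) := by
    rw [ContinuousMultilinearMap.linearDeriv_apply, map_sum, dgVec]
    simp only [euc, map_sum, hupd]
    rfl
  have hL : HasDerivAt G (euc (dgVec D δ w dw)) 0 := by rw [← hval, ← hfun]; exact hL
  -- derivative of the squared norm
  set c : ℝ := inner ℝ (euc (gVec D δ w)) (euc (dgVec D δ w dw)) with hc
  have hφ : HasDerivAt (fun t => (inner ℝ (G t) (G t) : ℝ)) (2 * c) 0 := by
    have h1 := hL.inner ℝ hL
    have h2 : (2 : ℝ) * c
        = inner ℝ (G 0) (euc (dgVec D δ w dw)) + inner ℝ (euc (dgVec D δ w dw)) (G 0) := by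
      rw [hG0, hc, real_inner_comm (euc (dgVec D δ w dw)) (euc (gVec D δ w)), two_mul]
    rw [h2]
    exact h1
  have h2c : (0 : ℝ) < 2 * c := by positivity
  have hslope := hasDerivAt_iff_tendsto_slope.mp hφ
  have hev : ∀ᶠ t in nhdsWithin (0 : ℝ) (Set.Ioi 0),
      0 < slope (fun t => (inner ℝ (G t) (G t) : ℝ)) 0 t := by
    have h1 : ∀ᶠ t in nhdsWithin (0 : ℝ) {(0 : ℝ)}ᶜ,
        0 < slope (fun t => (inner ℝ (G t) (G t) : ℝ)) 0 t :=
      hslope.eventually (eventually_gt_nhds h2c)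
    exact h1.filter_mono (nhdsWithin_mono _ (fun x hx => ne_of_gt hx))
  obtain ⟨ε, hε, hsub⟩ := mem_nhdsGT_iff_exists_Ioo_subset.mp hev
  refine ⟨ε, hε, fun t ht0 htε => ?_⟩
  have hs := hsub ⟨ht0, htε⟩
  rw [Set.mem_setOf_eq, slope_def_field] at hs
  have ht' : (0 : ℝ) < t - 0 := by simpa using ht0
  have hnum : (0 : ℝ) < inner ℝ (G t) (G t) - inner ℝ (G 0) (G 0) := by
    by_contra hcon
    push_neg at hcon
    have : ((inner ℝ (G t) (G t) : ℝ) - inner ℝ (G 0) (G 0)) / (t - 0) ≤ 0 :=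
      div_nonpos_iff.mpr (Or.inr ⟨hcon, le_of_lt ht'⟩)
    linarith
  have hstep : (inner ℝ (G 0) (G 0) : ℝ) < inner ℝ (G t) (G t) := by linarith
  rw [real_inner_self_eq_norm_sq, real_inner_self_eq_norm_sq, hG0] at hstep
  exact lt_of_pow_lt_pow_left₀ 2 (norm_nonneg _) hstep
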